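/- Let g ≥ 1, ζ = e^{2πi/(2g+2)}, and for 1 ≤ i,j ≤ g set A_{ij} = ζ^{i(2j-1)}(1-ζ^i) and B_{ij} = (ζ^{2ij}-1)/(ζ^i+1). Then the (i,j)-entry of A⁻¹B equals (1/(g+1)) Σ_{k=1}^{g} ζ^k(ζ^{-2ik}-1)(ζ^{2kj}-1)/(1-ζ^{2k}). -/
import Mathlib


open Finset

/-- Schindler's theorem: the `(i,j)`-entry of the period matrix `Z = Ω_a⁻¹ Ω_b` of the
hyperelliptic curve `w² = z^{2g+2} - 1` equals
`(1/(g+1)) Σ_{k=1}^{g} ζ^k(ζ^{-2ik}-1)(ζ^{2kj}-1)/(1-ζ^{2k})`. -/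
theorem stmt17 (g : ℕ) (hg : 1 ≤ g)
    (ζ : ℂ) (hζ : ζ = Complex.exp (2 * Real.pi * Complex.I / (2 * g + 2)))
    (A B : Matrix (Fin g) (Fin g) ℂ)
    (hA : ∀ i j : Fin g, A i j =
      ζ ^ (((i : ℕ) + 1) * (2 * ((j : ℕ) + 1) - 1)) * (1 - ζ ^ ((i : ℕ) + 1)))
    (hB : ∀ i j : Fin g, B i j =
      (ζ ^ (2 * ((i : ℕ) + 1) * ((j : ℕ) + 1)) - 1) / (ζ ^ ((i : ℕ) + 1) + 1)) :
    ∀ i j : Fin g, (A⁻¹ * B) i j =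
      (1 / ((g : ℂ) + 1)) * ∑ k ∈ Finset.Icc 1 g,
        ζ ^ (k : ℤ) * (ζ ^ (-(2 * ((i : ℤ) + 1) * (k : ℤ))) - 1)
          * (ζ ^ (2 * (k : ℤ) * ((j : ℤ) + 1)) - 1) / (1 - ζ ^ (2 * (k : ℤ))) := by
  have hn : (2*g+2) ≠ 0 := by omega
  have hprim : IsPrimitiveRoot ζ (2*g+2) := by
    rw [hζ, show (2*(g:ℂ)+2) = ((2*g+2:ℕ):ℂ) by push_cast; ring]
    exact Complex.isPrimitiveRoot_exp _ hn
  have hζ0 : ζ ≠ 0 := hprim.ne_zero hn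
  have h2 : ∀ m : ℤ, ζ ^ (2*m) = 1 ↔ ((g:ℤ)+1) ∣ m := by
    intro m
    rw [hprim.zpow_eq_one_iff_dvd,
      show ((2*g+2:ℕ):ℤ) = 2*((g:ℤ)+1) by push_cast; ring,
      mul_dvd_mul_iff_left (by norm_num : (2:ℤ) ≠ 0)]
  have hG : ((g:ℂ)+1) ≠ 0 := by
    have := Nat.cast_add_one_ne_zero (R := ℂ) g
    exact_mod_cast this
  have hD : ∀ m : ℤ, 0 < m → m ≤ g → 1 - ζ^(2*m) ≠ 0 := by
    intro m h1 h2m h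
    have h3 : ζ^(2*m) = 1 := by linear_combination -h
    have h4 := Int.le_of_dvd h1 ((h2 m).mp h3)
    omega
  have hplus : ∀ m : ℤ, 0 < m → m ≤ g → ζ^m + 1 ≠ 0 := by
    intro m h1 h2m h
    have h3 : ζ^(2*m) = 1 := by
      rw [two_mul, zpow_add₀ hζ0]
      have : ζ^m = -1 := by linear_combination h
      rw [this]; ring
    have h4 := Int.le_of_dvd h1 ((h2 m).mp h3)
    omega
  have hgeom : ∀ m : ℤ, ∑ l ∈ Finset.range g, ζ^(2*((l:ℤ)+1)*m)
      = if ((g:ℤ)+1) ∣ m then (g:ℂ) else -1 := by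
    intro m
    by_cases hd : ((g:ℤ)+1) ∣ m
    · rw [if_pos hd]
      rw [Finset.sum_congr rfl (fun l _ => ?_), Finset.sum_const, card_range, nsmul_eq_mul, mul_one]
      rw [show 2*((l:ℤ)+1)*m = 2*(((l:ℤ)+1)*m) by ring, h2]
      exact Dvd.dvd.mul_left hd _
    · rw [if_neg hd]
      have hx : ζ^(2*m) ≠ 1 := fun h => hd ((h2 m).mp h)
      have key : ∑ l ∈ Finset.range (g+1), (ζ^(2*m))^l = 0 := by
        rw [geom_sum_eq hx]
        have h1 : (ζ^(2*m))^(g+1) = 1 := by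
          rw [← zpow_natCast, ← zpow_mul,
            show (2*m)*((g+1:ℕ):ℤ) = 2*(m*((g:ℤ)+1)) by push_cast; ring, h2]
          exact dvd_mul_left _ m
        rw [h1]; simp
      have expand : ∑ l ∈ Finset.range (g+1), (ζ^(2*m))^l
          = (∑ l ∈ Finset.range g, ζ^(2*((l:ℤ)+1)*m)) + 1 := by
        rw [Finset.sum_range_succ', pow_zero]
        congr 1
        apply Finset.sum_congr rfl; intro l _
        rw [← zpow_natCast (ζ^(2*m)), ← zpow_mul]
        congr 1; push_cast; ring
      have := expand ▸ key
      linear_combination this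
  -- the explicit right inverse of A
  have hAE : A * (Matrix.of fun l k : Fin g =>
      ζ^((k:ℤ)+1) * (ζ^(-(2*((l:ℤ)+1)*((k:ℤ)+1))) - 1) * (1 + ζ^((k:ℤ)+1)) /
        ((1 - ζ^(2*((k:ℤ)+1))) * ((g:ℂ)+1))) = 1 := by
    ext i k
    have hkpos : (0:ℤ) < (k:ℤ)+1 := by positivity
    have hkle : ((k:ℤ)+1) ≤ g := by
      have := k.isLt; omega
    have hipos : (0:ℤ) < (i:ℤ)+1 := by positivity
    have hile : ((i:ℤ)+1) ≤ g := by
      have := i.isLt; omega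
    rw [Matrix.mul_apply, Matrix.one_apply]
    have hterm : ∀ l : Fin g, A i l * (Matrix.of fun l k : Fin g =>
        ζ^((k:ℤ)+1) * (ζ^(-(2*((l:ℤ)+1)*((k:ℤ)+1))) - 1) * (1 + ζ^((k:ℤ)+1)) /
          ((1 - ζ^(2*((k:ℤ)+1))) * ((g:ℂ)+1))) l k =
        ((1 - ζ^((i:ℤ)+1)) * (1 + ζ^((k:ℤ)+1)) * ζ^((k:ℤ)+1) * ζ^(-((i:ℤ)+1)) /
          ((1 - ζ^(2*((k:ℤ)+1))) * ((g:ℂ)+1))) *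
        (ζ^(2*((l:ℤ)+1)*((i:ℤ)-(k:ℤ))) - ζ^(2*((l:ℤ)+1)*((i:ℤ)+1))) := by
      intro l
      rw [hA, Matrix.of_apply]
      have ecast1 : (ζ:ℂ)^(((i:ℕ)+1)*(2*((l:ℕ)+1)-1)) = ζ^(((i:ℤ)+1)*(2*((l:ℤ)+1)-1)) := by
        rw [← zpow_natCast]
        congr 1
        rw [show 2*((l:ℕ)+1)-1 = 2*(l:ℕ)+1 by omega]
        push_cast; ring
      have ecast2 : (ζ:ℂ)^((i:ℕ)+1) = ζ^((i:ℤ)+1) := by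
        rw [← zpow_natCast]; norm_cast
      rw [ecast1, ecast2]
      have main : ζ^(((i:ℤ)+1)*(2*((l:ℤ)+1)-1)) * (ζ^(-(2*((l:ℤ)+1)*((k:ℤ)+1))) - 1)
          = ζ^(-((i:ℤ)+1)) * (ζ^(2*((l:ℤ)+1)*((i:ℤ)-(k:ℤ))) - ζ^(2*((l:ℤ)+1)*((i:ℤ)+1))) := by
        have m1 : ζ^(((i:ℤ)+1)*(2*((l:ℤ)+1)-1)) * ζ^(-(2*((l:ℤ)+1)*((k:ℤ)+1)))
            = ζ^(-((i:ℤ)+1)) * ζ^(2*((l:ℤ)+1)*((i:ℤ)-(k:ℤ))) := by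
          rw [← zpow_add₀ hζ0, ← zpow_add₀ hζ0]; congr 1; ring
        have m2 : ζ^(((i:ℤ)+1)*(2*((l:ℤ)+1)-1))
            = ζ^(-((i:ℤ)+1)) * ζ^(2*((l:ℤ)+1)*((i:ℤ)+1)) := by
          rw [← zpow_add₀ hζ0]; congr 1; ring
        calc ζ^(((i:ℤ)+1)*(2*((l:ℤ)+1)-1)) * (ζ^(-(2*((l:ℤ)+1)*((k:ℤ)+1))) - 1)
            = ζ^(((i:ℤ)+1)*(2*((l:ℤ)+1)-1)) * ζ^(-(2*((l:ℤ)+1)*((k:ℤ)+1)))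
              - ζ^(((i:ℤ)+1)*(2*((l:ℤ)+1)-1)) := by ring
          _ = _ := by rw [m1, m2]; ring
      calc ζ^(((i:ℤ)+1)*(2*((l:ℤ)+1)-1)) * (1 - ζ^((i:ℤ)+1)) *
            (ζ^((k:ℤ)+1) * (ζ^(-(2*((l:ℤ)+1)*((k:ℤ)+1))) - 1) * (1 + ζ^((k:ℤ)+1)) /
              ((1 - ζ^(2*((k:ℤ)+1))) * ((g:ℂ)+1)))
          = (1 - ζ^((i:ℤ)+1)) * (1 + ζ^((k:ℤ)+1)) * ζ^((k:ℤ)+1) *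
            (ζ^(((i:ℤ)+1)*(2*((l:ℤ)+1)-1)) * (ζ^(-(2*((l:ℤ)+1)*((k:ℤ)+1))) - 1)) /
              ((1 - ζ^(2*((k:ℤ)+1))) * ((g:ℂ)+1)) := by ring
        _ = (1 - ζ^((i:ℤ)+1)) * (1 + ζ^((k:ℤ)+1)) * ζ^((k:ℤ)+1) *
            (ζ^(-((i:ℤ)+1)) * (ζ^(2*((l:ℤ)+1)*((i:ℤ)-(k:ℤ))) - ζ^(2*((l:ℤ)+1)*((i:ℤ)+1)))) /
              ((1 - ζ^(2*((k:ℤ)+1))) * ((g:ℂ)+1)) := by rw [main]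
        _ = _ := by ring
    rw [Finset.sum_congr rfl (fun l _ => hterm l), ← Finset.mul_sum]
    have hsum : ∑ l : Fin g, (ζ^(2*((l:ℤ)+1)*((i:ℤ)-(k:ℤ))) - ζ^(2*((l:ℤ)+1)*((i:ℤ)+1)))
        = (if ((g:ℤ)+1) ∣ ((i:ℤ)-(k:ℤ)) then (g:ℂ) else -1)
          - (if ((g:ℤ)+1) ∣ ((i:ℤ)+1) then (g:ℂ) else -1) := by
      rw [Finset.sum_sub_distrib,
        Fin.sum_univ_eq_sum_range (fun l => ζ^(2*((l:ℤ)+1)*((i:ℤ)-(k:ℤ)))) g,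
        Fin.sum_univ_eq_sum_range (fun l => ζ^(2*((l:ℤ)+1)*((i:ℤ)+1))) g,
        hgeom, hgeom]
    rw [hsum]
    have hnd2 : ¬ ((g:ℤ)+1) ∣ ((i:ℤ)+1) := by
      intro hdvd
      have := Int.le_of_dvd hipos hdvd
      omega
    by_cases hik : i = k
    · subst hik
      rw [if_pos rfl, if_pos (by simp), if_neg hnd2]
      have hz2 : ζ^(2*((i:ℤ)+1)) = ζ^((i:ℤ)+1) * ζ^((i:ℤ)+1) := by
        rw [← zpow_add₀ hζ0]; congr 1; ring
      have hzneg : ζ^(-((i:ℤ)+1)) * ζ^((i:ℤ)+1) = 1 := by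
        rw [← zpow_add₀ hζ0, show -((i:ℤ)+1) + ((i:ℤ)+1) = 0 by ring, zpow_zero]
      have hDne := hD ((i:ℤ)+1) hipos hile
      rw [hz2] at hDne ⊢
      rw [show (g:ℂ) - (-1) = (g:ℂ)+1 by ring, div_mul_eq_mul_div,
        div_eq_one_iff_eq (mul_ne_zero hDne hG)]
      linear_combination (1 - ζ^((i:ℤ)+1) * ζ^((i:ℤ)+1)) * ((g:ℂ)+1) * hzneg
    · have hik' : (i:ℤ) ≠ (k:ℤ) := by
        intro h; exact hik (Fin.ext (by exact_mod_cast h))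
      have hnd1 : ¬ ((g:ℤ)+1) ∣ ((i:ℤ)-(k:ℤ)) := by
        intro hdvd
        have h0 : (i:ℤ)-(k:ℤ) ≠ 0 := sub_ne_zero.mpr hik'
        have h1 := Int.le_of_dvd (abs_pos.mpr h0) ((dvd_abs _ _).mpr hdvd)
        have h2a : |(i:ℤ)-(k:ℤ)| < (g:ℤ)+1 := by
          rw [abs_sub_lt_iff]
          have := i.isLt; have := k.isLt
          omega
        omega
      rw [if_neg hik, if_neg hnd1, if_neg hnd2]
      ring
  intro i j
  rw [Matrix.inv_eq_right_inv hAE, Matrix.mul_apply, Finset.mul_sum,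
    ← Finset.Ico_add_one_right_eq_Icc, Finset.sum_Ico_eq_sum_range]
  simp only [Nat.add_sub_cancel, Matrix.of_apply, hB]
  rw [Fin.sum_univ_eq_sum_range (fun k =>
    ζ^((k:ℤ)+1) * (ζ^(-(2*((i:ℤ)+1)*((k:ℤ)+1))) - 1) * (1 + ζ^((k:ℤ)+1)) /
      ((1 - ζ^(2*((k:ℤ)+1))) * ((g:ℂ)+1)) *
      ((ζ ^ (2 * (k + 1) * ((j:ℕ) + 1)) - 1) / (ζ ^ (k + 1) + 1))) g]
  apply Finset.sum_congr rfl
  intro k hk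
  have hkg : k < g := Finset.mem_range.mp hk
  have hkpos : (0:ℤ) < (k:ℤ)+1 := by positivity
  have hkle : ((k:ℤ)+1) ≤ g := by omega
  have ecast1 : (ζ:ℂ)^(2*(k+1)*((j:ℕ)+1)) = ζ^(2*((k:ℤ)+1)*((j:ℤ)+1)) := by
    rw [← zpow_natCast]; congr 1
  have ecast2 : (ζ:ℂ)^(k+1) = ζ^((k:ℤ)+1) := by
    rw [← zpow_natCast]; norm_cast
  have ecast3 : ((1+k:ℕ):ℤ) = (k:ℤ)+1 := by push_cast; ring
  rw [ecast1, ecast2, ecast3]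
  have hDne := hD ((k:ℤ)+1) hkpos hkle
  have hPne := hplus ((k:ℤ)+1) hkpos hkle
  field_simp
  ring
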